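/- Let (x_i, f_i) be a Schauder frame of a Banach space X. Then the set Y = { f ∈ X* : the series Σ_{i=1}^∞ f(x_i) f_i converges in norm in X* to f } is a norm-closed linear subspace of X*. Moreover, if the frame is locally shrinking, then Y equals the closed linear span of (f_i)_{i∈ℕ} in X*. -/

import Mathlib

open Filter Topology

/-- The quantity `sup { |g z| : z ∈ span (x i : i ≥ n), ‖z‖ ≤ 1 }`, i.e. the norm of the
restriction of `g` to the span of the tail `(x i)_{i ≥ n}`. -/
noncomputable def tailSupX {X : Type*} [NormedAddCommGroup X] [NormedSpace ℝ X]
    (x : ℕ → X) (g : X →L[ℝ] ℝ) (n : ℕ) : ℝ :=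
  sSup ((fun z : X => |g z|) ''
    {z | z ∈ Submodule.span ℝ (x '' {i | n ≤ i}) ∧ ‖z‖ ≤ 1})

set_option maxHeartbeats 1000000

/-- Let `(x i, f i)` be a Schauder frame of a Banach space `X`. Then
`Y = { g ∈ X* : ∑ g (x i) • f i converges in norm to g }` is a norm-closed linear subspace
of `X*`; moreover, if the frame is locally shrinking, then `Y` equals the closed linear
span of `(f i)` in `X*`. -/
theorem schauderFrame_Y_closed_subspace
    {X : Type*} [NormedAddCommGroup X] [NormedSpace ℝ X] [CompleteSpace X]
    (x : ℕ → X) (f : ℕ → X →L[ℝ] ℝ)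
    (hx : ∀ i, x i ≠ 0) (hf : ∀ i, f i ≠ 0)
    (hframe : ∀ v : X,
      Tendsto (fun n => ∑ i ∈ Finset.range n, f i v • x i) atTop (𝓝 v)) :
    (∃ Y : Submodule ℝ (X →L[ℝ] ℝ), IsClosed (Y : Set (X →L[ℝ] ℝ)) ∧
      ∀ g : X →L[ℝ] ℝ, g ∈ Y ↔
        Tendsto (fun n => ∑ i ∈ Finset.range n, g (x i) • f i) atTop (𝓝 g)) ∧
    ((∀ m : ℕ, Tendsto (tailSupX x (f m)) atTop (𝓝 0)) →
      {g : X →L[ℝ] ℝ |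
          Tendsto (fun n => ∑ i ∈ Finset.range n, g (x i) • f i) atTop (𝓝 g)} =
        closure ((Submodule.span ℝ (Set.range f) : Submodule ℝ (X →L[ℝ] ℝ)) :
          Set (X →L[ℝ] ℝ))) := by
  classical
  -- the partial-sum operators
  set S : ℕ → X →L[ℝ] X := fun n => ∑ i ∈ Finset.range n, (f i).smulRight (x i) with hSdef
  have hSapply : ∀ n v, S n v = ∑ i ∈ Finset.range n, f i v • x i := by
    intro n v
    simp [hSdef, ContinuousLinearMap.sum_apply]
  have hframe' : ∀ v : X, Tendsto (fun n => S n v) atTop (𝓝 v) := by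
    intro v
    simpa [hSapply] using hframe v
  -- uniform boundedness
  obtain ⟨C, hC⟩ : ∃ C, ∀ n, ‖S n‖ ≤ C := by
    apply banach_steinhaus
    intro v
    obtain ⟨C, hC⟩ := ((hframe' v).norm).bddAbove_range
    exact ⟨C, fun n => hC ⟨n, rfl⟩⟩
  have hC0 : (0 : ℝ) ≤ C := le_trans (norm_nonneg _) (hC 0)
  -- the partial-sum operators on the dual
  set T : ℕ → (X →L[ℝ] ℝ) → (X →L[ℝ] ℝ) :=
    fun n g => ∑ i ∈ Finset.range n, g (x i) • f i with hTdef
  have hT : ∀ n g, T n g = g.comp (S n) := by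
    intro n g
    ext v
    simp [hTdef, hSapply, ContinuousLinearMap.sum_apply, map_sum, map_smul, smul_eq_mul,
      mul_comm]
  have hTnorm : ∀ n (g h : X →L[ℝ] ℝ), ‖T n g - T n h‖ ≤ ‖g - h‖ * C := by
    intro n g h
    have : T n g - T n h = (g - h).comp (S n) := by
      rw [hT, hT, ContinuousLinearMap.sub_comp]
    rw [this]
    calc ‖(g - h).comp (S n)‖ ≤ ‖g - h‖ * ‖S n‖ := ContinuousLinearMap.opNorm_comp_le _ _
      _ ≤ ‖g - h‖ * C := by
        exact mul_le_mul_of_nonneg_left (hC n) (norm_nonneg _)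
  -- the subspace Y
  set Y : Submodule ℝ (X →L[ℝ] ℝ) :=
    { carrier := {g | Tendsto (fun n => ∑ i ∈ Finset.range n, g (x i) • f i) atTop (𝓝 g)}
      add_mem' := by
        intro a b ha hb
        have := ha.add hb
        simpa [add_smul, Finset.sum_add_distrib] using this
      zero_mem' := by simp
      smul_mem' := by
        intro c a ha
        have := ha.const_smul c
        simpa [smul_smul, Finset.smul_sum] using this } with hYdef
  have hYmem : ∀ g : X →L[ℝ] ℝ, g ∈ Y ↔
      Tendsto (fun n => ∑ i ∈ Finset.range n, g (x i) • f i) atTop (𝓝 g) := fun g => Iff.rfl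
  have hYT : ∀ g : X →L[ℝ] ℝ, g ∈ Y ↔ Tendsto (fun n => T n g) atTop (𝓝 g) := fun g => Iff.rfl
  -- closedness of Y
  have hYclosed : IsClosed (Y : Set (X →L[ℝ] ℝ)) := by
    rw [← closure_subset_iff_isClosed]
    intro g hg
    rw [SetLike.mem_coe, hYT, Metric.tendsto_atTop]
    intro ε hε
    have hδ : 0 < ε / (2 * (C + 1)) := by positivity
    obtain ⟨h, hhY, hgh⟩ := Metric.mem_closure_iff.mp hg _ hδ
    rw [SetLike.mem_coe, hYT, Metric.tendsto_atTop] at hhY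
    obtain ⟨N, hN⟩ := hhY (ε / 2) (by positivity)
    refine ⟨N, fun n hn => ?_⟩
    have h1 : dist (T n g) g ≤ ‖T n g - T n h‖ + dist (T n h) h + dist h g := by
      have := dist_triangle4 (T n g) (T n h) h g
      simpa [dist_eq_norm] using this
    have h2 : ‖T n g - T n h‖ ≤ ‖g - h‖ * C := hTnorm n g h
    have h3 : ‖g - h‖ < ε / (2 * (C + 1)) := by
      rwa [dist_eq_norm] at hgh
    have h4 : dist (T n h) h < ε / 2 := hN n hn
    have h5 : dist h g < ε / (2 * (C + 1)) := by rwa [dist_comm]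
    have hCp : (0 : ℝ) < C + 1 := by linarith
    have : ‖g - h‖ * C + ε / 2 + dist h g < ε := by
      have h6 : ‖g - h‖ * C ≤ (ε / (2 * (C + 1))) * C := by
        exact mul_le_mul_of_nonneg_right (le_of_lt h3) hC0
      have h7 : (ε / (2 * (C + 1))) * C + ε / (2 * (C + 1)) = ε / 2 := by
        field_simp
      nlinarith [h5, h6]
    linarith [h1, h2, h4, this]
  refine ⟨⟨Y, hYclosed, hYmem⟩, ?_⟩
  -- locally shrinking case
  intro hls
  have hYset : {g : X →L[ℝ] ℝ |
      Tendsto (fun n => ∑ i ∈ Finset.range n, g (x i) • f i) atTop (𝓝 g)} =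
      (Y : Set (X →L[ℝ] ℝ)) := rfl
  rw [hYset]
  apply Set.Subset.antisymm
  · -- Y ⊆ closure span
    intro g hg
    rw [SetLike.mem_coe, hYT] at hg
    refine mem_closure_of_tendsto hg (Eventually.of_forall fun n => ?_)
    exact Submodule.sum_mem _ fun i _ =>
      Submodule.smul_mem _ _ (Submodule.subset_span ⟨i, rfl⟩)
  · -- closure span ⊆ Y
    have hfm : ∀ m, f m ∈ Y := by
      intro m
      -- boundedness of the defining set of tailSupX
      have hbdd : ∀ n, BddAbove ((fun z : X => |f m z|) ''
          {z | z ∈ Submodule.span ℝ (x '' {i | n ≤ i}) ∧ ‖z‖ ≤ 1}) := by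
        intro n
        refine ⟨‖f m‖, ?_⟩
        rintro _ ⟨z, ⟨_, hz1⟩, rfl⟩
        calc |f m z| ≤ ‖f m‖ * ‖z‖ := (f m).le_opNorm z
          _ ≤ ‖f m‖ * 1 := mul_le_mul_of_nonneg_left hz1 (norm_nonneg _)
          _ = ‖f m‖ := mul_one _
      have htail0 : ∀ n, 0 ≤ tailSupX x (f m) n := by
        intro n
        have h0 : |f m (0 : X)| ∈ (fun z : X => |f m z|) ''
            {z | z ∈ Submodule.span ℝ (x '' {i | n ≤ i}) ∧ ‖z‖ ≤ 1} :=
          ⟨0, ⟨Submodule.zero_mem _, by simp⟩, rfl⟩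
        have := le_csSup (hbdd n) h0
        simpa [tailSupX] using this
      -- the key estimate on the closure of the span of the tail
      have hkey : ∀ n, ∀ z ∈ closure ((Submodule.span ℝ (x '' {i | n ≤ i}) : Submodule ℝ X) :
          Set X), |f m z| ≤ tailSupX x (f m) n * ‖z‖ := by
        intro n
        have hspan : ∀ z ∈ (Submodule.span ℝ (x '' {i | n ≤ i}) : Submodule ℝ X),
            |f m z| ≤ tailSupX x (f m) n * ‖z‖ := by
          intro z hz
          rcases eq_or_ne z 0 with rfl | hz0
          · simp
          · have hnz : (0 : ℝ) < ‖z‖ := norm_pos_iff.mpr hz0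
            set u : X := ‖z‖⁻¹ • z with hu
            have humem : u ∈ Submodule.span ℝ (x '' {i | n ≤ i}) :=
              Submodule.smul_mem _ _ hz
            have hunorm : ‖u‖ ≤ 1 := by
              rw [hu, norm_smul, norm_inv, norm_norm, inv_mul_cancel₀ (ne_of_gt hnz)]
            have hle : |f m u| ≤ tailSupX x (f m) n :=
              le_csSup (hbdd n) ⟨u, ⟨humem, hunorm⟩, rfl⟩
            have : |f m z| = ‖z‖ * |f m u| := by
              rw [hu, map_smul, smul_eq_mul, abs_mul, abs_inv, abs_norm]
              field_simp
            rw [this, mul_comm (tailSupX x (f m) n) ‖z‖]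
            exact mul_le_mul_of_nonneg_left hle (le_of_lt hnz)
        have hclosed : IsClosed {z : X | |f m z| ≤ tailSupX x (f m) n * ‖z‖} :=
          isClosed_le ((f m).continuous.abs) (continuous_const.mul continuous_norm)
        intro z hz
        exact closure_minimal hspan hclosed hz
      -- the tails live in the closure of the span of the tail
      have htailmem : ∀ n (v : X), v - S n v ∈
          closure ((Submodule.span ℝ (x '' {i | n ≤ i}) : Submodule ℝ X) : Set X) := by
        intro n v
        have h1 : Tendsto (fun k => S k v - S n v) atTop (𝓝 (v - S n v)) :=
          (hframe' v).sub_const _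
        refine mem_closure_of_tendsto h1 ?_
        filter_upwards [eventually_ge_atTop n] with k hk
        have : S k v - S n v = ∑ i ∈ Finset.Ico n k, f i v • x i := by
          rw [hSapply, hSapply, eq_comm, Finset.sum_Ico_eq_sub _ hk]
        rw [this]
        exact Submodule.sum_mem _ fun i hi =>
          Submodule.smul_mem _ _ (Submodule.subset_span ⟨i, (Finset.mem_Ico.mp hi).1, rfl⟩)
      -- the norm estimate
      have hbound : ∀ n, ‖T n (f m) - f m‖ ≤ tailSupX x (f m) n * (1 + C) := by
        intro n
        rw [← norm_neg, neg_sub]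
        refine ContinuousLinearMap.opNorm_le_bound _
          (mul_nonneg (htail0 n) (by linarith)) fun v => ?_
        have h1 : (f m - T n (f m)) v = f m (v - S n v) := by
          simp [hT, ContinuousLinearMap.sub_apply, ContinuousLinearMap.comp_apply, map_sub]
        have h2 : ‖v - S n v‖ ≤ (1 + C) * ‖v‖ := by
          calc ‖v - S n v‖ ≤ ‖v‖ + ‖S n v‖ := norm_sub_le _ _
            _ ≤ ‖v‖ + C * ‖v‖ := by
              have := (S n).le_opNorm v
              have h := mul_le_mul_of_nonneg_right (hC n) (norm_nonneg v)
              linarith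
            _ = (1 + C) * ‖v‖ := by ring
        calc ‖(f m - T n (f m)) v‖ = |f m (v - S n v)| := by rw [h1]; rfl
          _ ≤ tailSupX x (f m) n * ‖v - S n v‖ := hkey n _ (htailmem n v)
          _ ≤ tailSupX x (f m) n * ((1 + C) * ‖v‖) :=
              mul_le_mul_of_nonneg_left h2 (htail0 n)
          _ = tailSupX x (f m) n * (1 + C) * ‖v‖ := by ring
      -- conclude
      rw [hYT, ← tendsto_sub_nhds_zero_iff]
      rw [tendsto_zero_iff_norm_tendsto_zero]
      refine squeeze_zero (fun n => norm_nonneg _) hbound ?_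
      simpa using ((hls m).mul_const (1 + C))
    have hspanle : (Submodule.span ℝ (Set.range f) : Set (X →L[ℝ] ℝ)) ⊆ (Y : Set _) := by
      intro g hg
      exact Submodule.span_le.mpr (by rintro _ ⟨m, rfl⟩; exact hfm m) hg
    exact closure_minimal hspanle hYclosed
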